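/- arXiv:1803.09350 — 2 statements merged into one kernel-verified Lean document; each statement's English description precedes it below -/
import Mathlib

section
/- If F is the joint CDF of random variables x₁,…,x_d with continuous marginal CDFs F₁,…,F_d, then there exists a unique function C : [0,1]^d → [0,1] (a copula, i.e. a d-variate CDF with uniform marginals on [0,1]) such that F(x₁,…,x_d) = C(F₁(x₁),…,F_d(x_d)) for all (x₁,…,x_d). -/
open MeasureTheory
open scoped ProbabilityTheory

/-- The uniform distribution on `[0,1]`. -/
noncomputable def stdUniform : Measure ℝ := volume.restrict (Set.Icc 0 1)

/-- `C : ℝ^d → ℝ` is a (d-dimensional) copula if it is the joint CDF of some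
probability measure on `[0,1]^d` all of whose one-dimensional marginals are
uniform on `[0,1]`. -/
def IsCopula (d : ℕ) (C : (Fin d → ℝ) → ℝ) : Prop :=
  ∃ μ : Measure (Fin d → ℝ), IsProbabilityMeasure μ ∧
    (∀ i : Fin d, Measure.map (fun y => y i) μ = stdUniform) ∧
    (∀ x : Fin d → ℝ, C x = (μ {y | ∀ i, y i ≤ x i}).toReal)

open Set Filter ProbabilityTheory
open scoped Topology ENNReal NNReal

instance : IsProbabilityMeasure stdUniform := by
  constructor
  rw [stdUniform, Measure.restrict_apply MeasurableSet.univ, Set.univ_inter,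
    Real.volume_Icc]
  norm_num

lemma stdUniform_Iic_of_mem {u : ℝ} (h0 : 0 ≤ u) (h1 : u ≤ 1) :
    stdUniform (Set.Iic u) = ENNReal.ofReal u := by
  rw [stdUniform, Measure.restrict_apply measurableSet_Iic]
  have : Set.Iic u ∩ Set.Icc 0 1 = Set.Icc 0 u := by
    ext t
    simp only [Set.mem_inter_iff, Set.mem_Iic, Set.mem_Icc]
    constructor
    · rintro ⟨h, h', _⟩; exact ⟨h', h⟩
    · rintro ⟨h, h'⟩; exact ⟨h', h, h'.trans h1⟩
  rw [this, Real.volume_Icc, sub_zero]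

lemma stdUniform_Iic_of_nonpos {u : ℝ} (h : u ≤ 0) : stdUniform (Set.Iic u) = 0 := by
  refine le_antisymm ?_ bot_le
  calc stdUniform (Set.Iic u) ≤ stdUniform (Set.Iic 0) :=
        measure_mono (Set.Iic_subset_Iic.2 h)
    _ = 0 := by rw [stdUniform_Iic_of_mem le_rfl zero_le_one]; simp

lemma stdUniform_Iic_of_ge {u : ℝ} (h : 1 ≤ u) : stdUniform (Set.Iic u) = 1 := by
  refine le_antisymm (by simpa using prob_le_one) ?_
  have : stdUniform (Set.Icc 0 1) = 1 := by
    rw [stdUniform, Measure.restrict_apply measurableSet_Icc, Set.inter_self,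
      Real.volume_Icc]
    norm_num
  rw [← this]
  refine measure_mono fun t ht => ?_
  exact ht.2.trans h

lemma stdUniform_Ioi_one : stdUniform (Set.Ioi 1) = 0 := by
  rw [stdUniform, Measure.restrict_apply measurableSet_Ioi]
  have : Set.Ioi (1:ℝ) ∩ Set.Icc 0 1 = ∅ := by
    ext t; simp only [Set.mem_inter_iff, Set.mem_Ioi, Set.mem_Icc, Set.mem_empty_iff_false,
      iff_false]
    rintro ⟨h1, _, h2⟩; linarith
  rw [this, measure_empty]

lemma stdUniform_Ioc_le {a b : ℝ} : stdUniform (Set.Ioc a b) ≤ ENNReal.ofReal (b - a) := by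
  rw [stdUniform]
  calc volume.restrict (Set.Icc (0:ℝ) 1) (Set.Ioc a b) ≤ volume (Set.Ioc a b) :=
        Measure.restrict_le_self _
    _ = ENNReal.ofReal (b - a) := Real.volume_Ioc

/-- Probability integral transform: pushing forward a probability measure on `ℝ` with
continuous CDF through its own CDF gives the uniform distribution on `[0,1]`. -/
lemma pit (μ : Measure ℝ) [IsProbabilityMeasure μ]
    (hc : Continuous fun t => cdf μ t) :
    Measure.map (fun t => cdf μ t) μ = stdUniform := by
  have hmeas : Measurable fun t => cdf μ t := hc.measurable
  haveI : IsProbabilityMeasure (Measure.map (fun t => cdf μ t) μ) :=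
    Measure.isProbabilityMeasure_map hmeas.aemeasurable
  refine Measure.ext_of_Iic _ _ fun u => ?_
  rw [Measure.map_apply hmeas measurableSet_Iic]
  rcases lt_or_ge u 0 with hu | hu0
  · have h1 : (fun t => cdf μ t) ⁻¹' Set.Iic u = ∅ := by
      ext t
      simp only [Set.mem_preimage, Set.mem_Iic, Set.mem_empty_iff_false, iff_false, not_le]
      exact lt_of_lt_of_le hu (cdf_nonneg μ t)
    rw [h1, measure_empty, stdUniform_Iic_of_nonpos hu.le]
  rcases le_or_gt 1 u with hu1 | hu1
  · have h1 : (fun t => cdf μ t) ⁻¹' Set.Iic u = Set.univ := by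
      ext t
      simp only [Set.mem_preimage, Set.mem_Iic, Set.mem_univ, iff_true]
      exact (cdf_le_one μ t).trans hu1
    rw [h1, measure_univ, stdUniform_Iic_of_ge hu1]
  · -- 0 ≤ u < 1
    rw [stdUniform_Iic_of_mem hu0 hu1.le]
    set S : Set ℝ := (fun t => cdf μ t) ⁻¹' Set.Iic u with hSdef
    by_cases hS : S.Nonempty
    · have hclosed : IsClosed S := IsClosed.preimage hc isClosed_Iic
      have hbdd : BddAbove S := by
        obtain ⟨T, hT⟩ := (eventually_atTop.mp
          ((tendsto_cdf_atTop μ).eventually_const_lt hu1))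
        refine ⟨T, fun t ht => ?_⟩
        by_contra h
        push_neg at h
        exact absurd ht (by simpa [hSdef] using not_le.2 (hT t h.le))
      set s := sSup S with hsdef
      have hs_mem : s ∈ S := hclosed.csSup_mem hS hbdd
      have hGs_le : cdf μ s ≤ u := hs_mem
      have hGs_ge : u ≤ cdf μ s := by
        by_contra h
        push_neg at h
        obtain ⟨t, htgt, htlt⟩ :=
          (((hc.tendsto s).eventually_lt_const h)).exists_gt
        exact absurd (le_csSup hbdd (by simpa [hSdef] using htlt.le)) (not_le.2 htgt)
      have hSIic : S = Set.Iic s := by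
        ext t
        simp only [hSdef, Set.mem_preimage, Set.mem_Iic]
        constructor
        · intro h; exact le_csSup hbdd h
        · intro h; exact ((monotone_cdf μ) h).trans hGs_le
      rw [hSIic, ← ofReal_cdf μ s, le_antisymm hGs_le hGs_ge]
    · have hempty : S = ∅ := Set.not_nonempty_iff_eq_empty.mp hS
      have hu0' : u = 0 := by
        rcases eq_or_lt_of_le hu0 with h | h
        · exact h.symm
        · exfalso
          obtain ⟨t, ht⟩ := ((tendsto_cdf_atBot μ).eventually_lt_const h).exists
          exact hS ⟨t, by simpa [hSdef] using ht.le⟩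
      rw [hempty, measure_empty, hu0', ENNReal.ofReal_zero]

lemma exists_eq_of_tendsto {G : ℝ → ℝ} (hc : Continuous G)
    (h0 : Tendsto G atBot (𝓝 0)) (h1 : Tendsto G atTop (𝓝 1))
    {c : ℝ} (hc0 : 0 < c) (hc1 : c < 1) : ∃ t, G t = c := by
  obtain ⟨a, ha⟩ := (h0.eventually_lt_const hc0).exists
  obtain ⟨b, hb⟩ := (h1.eventually_const_lt hc1).exists
  rcases le_total a b with hab | hba
  · have := intermediate_value_Icc hab hc.continuousOn
    obtain ⟨t, _, ht⟩ := this ⟨ha.le, hb.le⟩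
    exact ⟨t, ht⟩
  · have := intermediate_value_Icc' hba hc.continuousOn
    obtain ⟨t, _, ht⟩ := this ⟨ha.le, hb.le⟩
    exact ⟨t, ht⟩

/-- lower-orthant sets are measurable. -/
lemma measurableSet_orthant {d : ℕ} (x : Fin d → ℝ) :
    MeasurableSet {y : Fin d → ℝ | ∀ i, y i ≤ x i} := by
  have : {y : Fin d → ℝ | ∀ i, y i ≤ x i} =
      ⋂ i, (fun y : Fin d → ℝ => y i) ⁻¹' Set.Iic (x i) := by
    ext y; simp [Set.mem_iInter]
  rw [this]
  exact MeasurableSet.iInter fun i => (measurable_pi_apply i) measurableSet_Iic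

/-- Two copula measures agreeing on lower orthants with corner in the open cube agree on
all lower orthants. -/
lemma copula_orthant_le {d : ℕ} (μ ν : Measure (Fin d → ℝ))
    [IsProbabilityMeasure μ] [IsProbabilityMeasure ν]
    (hμ : ∀ i, Measure.map (fun y => y i) μ = stdUniform)
    (h : ∀ c : Fin d → ℝ, (∀ i, c i ∈ Set.Ioo (0:ℝ) 1) →
      μ {y | ∀ i, y i ≤ c i} = ν {y | ∀ i, y i ≤ c i})
    (x : Fin d → ℝ) :
    μ {y | ∀ i, y i ≤ x i} ≤ ν {y | ∀ i, y i ≤ x i} := by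
  have hmargset : ∀ (i : Fin d) (s : Set ℝ), MeasurableSet s →
      μ {y : Fin d → ℝ | y i ∈ s} = stdUniform s := by
    intro i s hs
    rw [← hμ i, Measure.map_apply (measurable_pi_apply i) hs]
    rfl
  by_cases hx : ∀ i, 0 < x i
  · refine ENNReal.le_of_forall_pos_le_add fun ε hε _ => ?_
    set r : ℝ := (ε : ℝ) / (d + 1) with hrdef
    have hr : 0 < r := div_pos hε (by positivity)
    set m : Fin d → ℝ := fun i => min (x i) 1 with hmdef
    have hm0 : ∀ i, 0 < m i := fun i => lt_min (hx i) zero_lt_one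
    have hm1 : ∀ i, m i ≤ 1 := fun i => min_le_right _ _
    have hmx : ∀ i, m i ≤ x i := fun i => min_le_left _ _
    set z : Fin d → ℝ := fun i => m i - min r (m i / 2) with hzdef
    have hz0 : ∀ i, 0 < z i := by
      intro i
      have : min r (m i / 2) ≤ m i / 2 := min_le_right _ _
      have := hm0 i
      simp only [hzdef]
      linarith
    have hz1 : ∀ i, z i < 1 := by
      intro i
      have h1 : 0 < min r (m i / 2) := lt_min hr (by linarith [hm0 i])
      have := hm1 i
      simp only [hzdef]
      linarith
    have hzx : ∀ i, z i ≤ x i := by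
      intro i
      have h1 : 0 < min r (m i / 2) := lt_min hr (by linarith [hm0 i])
      have := hmx i
      simp only [hzdef]
      linarith
    -- inclusion
    have hincl : {y : Fin d → ℝ | ∀ i, y i ≤ x i} ⊆
        {y | ∀ i, y i ≤ z i} ∪ ((⋃ i, {y | 1 < y i}) ∪
          ⋃ i, {y : Fin d → ℝ | z i < y i ∧ y i ≤ m i}) := by
      intro y hy
      by_cases hyz : ∀ i, y i ≤ z i
      · exact Or.inl hyz
      · push_neg at hyz
        obtain ⟨i, hi⟩ := hyz
        rcases le_or_gt (y i) 1 with hyi | hyi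
        · exact Or.inr (Or.inr (Set.mem_iUnion.2 ⟨i, hi, le_min (hy i) hyi⟩))
        · exact Or.inr (Or.inl (Set.mem_iUnion.2 ⟨i, hyi⟩))
    have hover : ∀ i, μ {y : Fin d → ℝ | 1 < y i} = 0 := by
      intro i
      rw [show {y : Fin d → ℝ | 1 < y i} = {y : Fin d → ℝ | y i ∈ Set.Ioi 1} from rfl,
        hmargset i _ measurableSet_Ioi, stdUniform_Ioi_one]
    have hbad : ∀ i, μ {y : Fin d → ℝ | z i < y i ∧ y i ≤ m i} ≤ ENNReal.ofReal r := by
      intro i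
      have : {y : Fin d → ℝ | z i < y i ∧ y i ≤ m i} =
          {y : Fin d → ℝ | y i ∈ Set.Ioc (z i) (m i)} := rfl
      rw [this, hmargset i _ measurableSet_Ioc]
      refine stdUniform_Ioc_le.trans (ENNReal.ofReal_le_ofReal ?_)
      simp only [hzdef]
      have : min r (m i / 2) ≤ r := min_le_left _ _
      linarith
    have hz_eq : μ {y : Fin d → ℝ | ∀ i, y i ≤ z i} = ν {y | ∀ i, y i ≤ z i} :=
      h z fun i => ⟨hz0 i, hz1 i⟩
    have hz_le : ν {y : Fin d → ℝ | ∀ i, y i ≤ z i} ≤ ν {y | ∀ i, y i ≤ x i} :=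
      measure_mono fun y hy i => (hy i).trans (hzx i)
    have hsum : μ (⋃ i, {y : Fin d → ℝ | z i < y i ∧ y i ≤ m i}) ≤ (ε : ℝ≥0∞) := by
      calc μ (⋃ i, {y : Fin d → ℝ | z i < y i ∧ y i ≤ m i})
          ≤ ∑' i : Fin d, μ {y : Fin d → ℝ | z i < y i ∧ y i ≤ m i} := measure_iUnion_le _
        _ ≤ ∑' _ : Fin d, ENNReal.ofReal r := ENNReal.tsum_le_tsum hbad
        _ = (d : ℝ≥0∞) * ENNReal.ofReal r := by
            rw [tsum_fintype]
            simp [Finset.sum_const, Finset.card_univ, nsmul_eq_mul]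
        _ = ENNReal.ofReal (d * r) := by
            rw [ENNReal.ofReal_mul (Nat.cast_nonneg d : (0:ℝ) ≤ (d:ℝ)),
              ENNReal.ofReal_natCast]
        _ ≤ ENNReal.ofReal ε := by
            refine ENNReal.ofReal_le_ofReal ?_
            have hd : (0:ℝ) < (d:ℝ) + 1 := by positivity
            have hεnn : (0:ℝ) ≤ (ε:ℝ) := ε.2
            rw [hrdef, ← mul_div_assoc, div_le_iff₀ hd]
            nlinarith [(Nat.cast_nonneg d : (0:ℝ) ≤ (d:ℝ))]
        _ = (ε : ℝ≥0∞) := ENNReal.ofReal_coe_nnreal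
    have hover_union : μ (⋃ i, {y : Fin d → ℝ | 1 < y i}) = 0 :=
      measure_iUnion_null fun i => hover i
    calc μ {y : Fin d → ℝ | ∀ i, y i ≤ x i}
        ≤ μ ({y | ∀ i, y i ≤ z i} ∪ ((⋃ i, {y | 1 < y i}) ∪
            ⋃ i, {y : Fin d → ℝ | z i < y i ∧ y i ≤ m i})) := measure_mono hincl
      _ ≤ μ {y | ∀ i, y i ≤ z i} + μ ((⋃ i, {y | 1 < y i}) ∪
            ⋃ i, {y : Fin d → ℝ | z i < y i ∧ y i ≤ m i}) := measure_union_le _ _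
      _ ≤ μ {y | ∀ i, y i ≤ z i} + (μ (⋃ i, {y | 1 < y i}) +
            μ (⋃ i, {y : Fin d → ℝ | z i < y i ∧ y i ≤ m i})) := by
          gcongr
          exact measure_union_le _ _
      _ ≤ ν {y | ∀ i, y i ≤ z i} + (0 + ε) := by
          rw [hz_eq]
          exact add_le_add le_rfl (add_le_add (le_of_eq hover_union) hsum)
      _ ≤ ν {y | ∀ i, y i ≤ x i} + ε := by rw [zero_add]; gcongr
  · push_neg at hx
    obtain ⟨i, hi⟩ := hx
    have : μ {y : Fin d → ℝ | ∀ j, y j ≤ x j} ≤ μ {y : Fin d → ℝ | y i ∈ Set.Iic (x i)} :=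
      measure_mono fun y hy => hy i
    rw [hmargset i _ measurableSet_Iic, stdUniform_Iic_of_nonpos hi] at this
    exact le_trans this (zero_le)

/-- **Sklar's theorem (continuous marginals).** If `F` is the joint CDF of
random variables `X 0, …, X (d-1)` whose marginal CDFs `Fm i` are continuous,
then there is a unique copula `C` with `F x = C (Fm 0 (x 0), …, Fm (d-1) (x (d-1)))`. -/
theorem sklar_exists_unique_copula
    {Ω : Type*} [MeasureSpace Ω] [IsProbabilityMeasure (ℙ : Measure Ω)]
    (d : ℕ) (X : Fin d → Ω → ℝ) (hX : ∀ i, Measurable (X i))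
    (F : (Fin d → ℝ) → ℝ)
    (hF : ∀ x, F x = (ℙ {ω | ∀ i, X i ω ≤ x i}).toReal)
    (Fm : Fin d → ℝ → ℝ)
    (hFm : ∀ i t, Fm i t = (ℙ {ω | X i ω ≤ t}).toReal)
    (hcont : ∀ i, Continuous (Fm i)) :
    ∃! C : (Fin d → ℝ) → ℝ, IsCopula d C ∧
      ∀ x : Fin d → ℝ, F x = C (fun i => Fm i (x i)) := by
  classical
  set μi : Fin d → Measure ℝ := fun i => Measure.map (X i) ℙ with hμidef
  haveI : ∀ i, IsProbabilityMeasure (μi i) := fun i =>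
    Measure.isProbabilityMeasure_map (hX i).aemeasurable
  have hFm_cdf : ∀ i t, Fm i t = cdf (μi i) t := by
    intro i t
    rw [hFm i t, cdf_eq_real, measureReal_def, hμidef, Measure.map_apply (hX i) measurableSet_Iic]
    rfl
  have hcont' : ∀ i, Continuous fun t => cdf (μi i) t := by
    intro i
    have : (fun t => cdf (μi i) t) = Fm i := by funext t; rw [hFm_cdf i t]
    rw [this]; exact hcont i
  -- the map into the cube
  set T : Ω → (Fin d → ℝ) := fun ω i => Fm i (X i ω) with hTdef
  have hT : Measurable T :=
    measurable_pi_lambda _ fun i => ((hcont i).measurable).comp (hX i)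
  set ν : Measure (Fin d → ℝ) := Measure.map T ℙ with hνdef
  haveI : IsProbabilityMeasure ν := Measure.isProbabilityMeasure_map hT.aemeasurable
  -- marginals of ν
  have hmarg : ∀ i : Fin d, Measure.map (fun y => y i) ν = stdUniform := by
    intro i
    rw [hνdef, Measure.map_map (measurable_pi_apply i) hT]
    have h1 : ((fun y : Fin d → ℝ => y i) ∘ T) = fun ω => cdf (μi i) (X i ω) := by
      funext ω
      simp only [Function.comp_apply, hTdef, hFm_cdf]
    rw [h1, show (fun ω => cdf (μi i) (X i ω)) = (fun t => cdf (μi i) t) ∘ (X i) from rfl,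
      ← Measure.map_map (hcont' i).measurable (hX i)]
    exact pit (μi i) (hcont' i)
  have hFm_mono : ∀ i, Monotone (Fm i) := by
    intro i
    have : Fm i = fun t => cdf (μi i) t := by funext t; exact hFm_cdf i t
    rw [this]
    exact monotone_cdf (μi i)
  have hFm_nonneg : ∀ i t, 0 ≤ Fm i t := fun i t => (hFm_cdf i t) ▸ cdf_nonneg (μi i) t
  have hFm_le_one : ∀ i t, Fm i t ≤ 1 := fun i t => (hFm_cdf i t) ▸ cdf_le_one (μi i) t
  -- measurability of events
  have hAmeas : ∀ x : Fin d → ℝ, MeasurableSet {ω | ∀ i, X i ω ≤ x i} := by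
    intro x
    have : {ω | ∀ i, X i ω ≤ x i} = ⋂ i, (X i) ⁻¹' Set.Iic (x i) := by
      ext ω; simp [Set.mem_iInter]
    rw [this]
    exact MeasurableSet.iInter fun i => (hX i) measurableSet_Iic
  -- per-coordinate measure equalities
  have hcoord : ∀ (i : Fin d) (t : ℝ),
      ℙ {ω | X i ω ≤ t} = ℙ {ω | Fm i (X i ω) ≤ Fm i t} := by
    intro i t
    have h1 : ℙ {ω | X i ω ≤ t} = ENNReal.ofReal (Fm i t) := by
      rw [hFm_cdf i t, ofReal_cdf, hμidef, Measure.map_apply (hX i) measurableSet_Iic]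
      rfl
    have h2 : ℙ {ω | Fm i (X i ω) ≤ Fm i t} = ENNReal.ofReal (Fm i t) := by
      have hmeas : Measurable fun ω => Fm i (X i ω) := (hcont i).measurable.comp (hX i)
      have : ℙ {ω | Fm i (X i ω) ≤ Fm i t} =
          Measure.map (fun ω => Fm i (X i ω)) ℙ (Set.Iic (Fm i t)) := by
        rw [Measure.map_apply hmeas measurableSet_Iic]; rfl
      rw [this]
      have hmm : Measure.map (fun ω => Fm i (X i ω)) ℙ = stdUniform := by
        have := hmarg i
        rw [hνdef, Measure.map_map (measurable_pi_apply i) hT] at this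
        have h1' : ((fun y : Fin d → ℝ => y i) ∘ T) = fun ω => Fm i (X i ω) := rfl
        rwa [h1'] at this
      rw [hmm, stdUniform_Iic_of_mem (hFm_nonneg i t) (hFm_le_one i t)]
    rw [h1, h2]
  -- joint measure equality
  have heq : ∀ x : Fin d → ℝ,
      ℙ {ω | ∀ i, X i ω ≤ x i} = ℙ {ω | ∀ i, Fm i (X i ω) ≤ Fm i (x i)} := by
    intro x
    set A := {ω | ∀ i, X i ω ≤ x i} with hA
    set B := {ω | ∀ i, Fm i (X i ω) ≤ Fm i (x i)} with hB
    have hAB : A ⊆ B := fun ω hω i => hFm_mono i (hω i)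
    have hnull : ∀ i : Fin d,
        ℙ ({ω | Fm i (X i ω) ≤ Fm i (x i)} \ {ω | X i ω ≤ x i}) = 0 := by
      intro i
      have hsub : {ω | X i ω ≤ x i} ⊆ {ω | Fm i (X i ω) ≤ Fm i (x i)} :=
        fun ω hω => hFm_mono i hω
      have hmsA : MeasurableSet {ω | X i ω ≤ x i} := (hX i) measurableSet_Iic
      rw [measure_diff hsub hmsA.nullMeasurableSet (measure_ne_top _ _),
        ← hcoord i (x i), tsub_self]
    have hBdiff : B \ A ⊆ ⋃ i, ({ω | Fm i (X i ω) ≤ Fm i (x i)} \ {ω | X i ω ≤ x i}) := by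
      rintro ω ⟨hωB, hωA⟩
      simp only [hA, Set.mem_setOf_eq, not_forall] at hωA
      obtain ⟨i, hi⟩ := hωA
      exact Set.mem_iUnion.2 ⟨i, hωB i, hi⟩
    have h0 : ℙ (B \ A) = 0 :=
      measure_mono_null hBdiff (measure_iUnion_null fun i => hnull i)
    refine le_antisymm (measure_mono hAB) ?_
    calc ℙ B ≤ ℙ (A ∪ (B \ A)) := measure_mono (by rw [Set.union_diff_cancel hAB])
      _ ≤ ℙ A + ℙ (B \ A) := measure_union_le _ _
      _ = ℙ A := by rw [h0, add_zero]
  -- definition of C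
  set C : (Fin d → ℝ) → ℝ := fun x => (ν {y | ∀ i, y i ≤ x i}).toReal with hCdef
  have hC_marg : IsCopula d C := ⟨ν, inferInstance, hmarg, fun x => rfl⟩
  have hFC : ∀ x : Fin d → ℝ, F x = C (fun i => Fm i (x i)) := by
    intro x
    rw [hF x, hCdef]
    congr 1
    rw [hνdef, Measure.map_apply hT (measurableSet_orthant _)]
    rw [heq x]
    rfl
  refine ⟨C, ⟨hC_marg, hFC⟩, ?_⟩
  -- uniqueness
  rintro C' ⟨⟨μ', hμ'prob, hμ'marg, hμ'eq⟩, hFC'⟩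
  haveI := hμ'prob
  -- agreement on the open cube
  have hcube : ∀ c : Fin d → ℝ, (∀ i, c i ∈ Set.Ioo (0:ℝ) 1) →
      μ' {y | ∀ i, y i ≤ c i} = ν {y | ∀ i, y i ≤ c i} := by
    intro c hc
    have hx : ∀ i : Fin d, ∃ t : ℝ, Fm i t = c i := by
      intro i
      have hb : Tendsto (Fm i) atBot (𝓝 0) := by
        have : Fm i = fun t => cdf (μi i) t := by funext t; exact hFm_cdf i t
        rw [this]; exact tendsto_cdf_atBot (μi i)
      have ht : Tendsto (Fm i) atTop (𝓝 1) := by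
        have : Fm i = fun t => cdf (μi i) t := by funext t; exact hFm_cdf i t
        rw [this]; exact tendsto_cdf_atTop (μi i)
      exact exists_eq_of_tendsto (hcont i) hb ht (hc i).1 (hc i).2
    choose x hxc using hx
    have hcx : c = fun i => Fm i (x i) := by funext i; rw [hxc i]
    have hreal : C' c = C c := by
      rw [hcx]
      rw [← hFC' x, hFC x]
    have h1 : (μ' {y | ∀ i, y i ≤ c i}).toReal = (ν {y | ∀ i, y i ≤ c i}).toReal := by
      rw [← hμ'eq c]
      exact hreal
    exact (ENNReal.toReal_eq_toReal_iff' (measure_ne_top _ _) (measure_ne_top _ _)).mp h1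
  have hmeq : ∀ x : Fin d → ℝ, μ' {y | ∀ i, y i ≤ x i} = ν {y | ∀ i, y i ≤ x i} := by
    intro x
    refine le_antisymm ?_ ?_
    · exact copula_orthant_le μ' ν hμ'marg hcube x
    · exact copula_orthant_le ν μ' hmarg (fun c hc => (hcube c hc).symm) x
  funext x
  rw [hμ'eq x, hmeq x]
end

section
/- Given any d-dimensional copula C and any univariate CDFs F₁,…,F_d, the function F(x₁,…,x_d) := C(F₁(x₁),…,F_d(x_d)) is a valid d-dimensional CDF whose marginals are F₁,…,F_d. -/
open MeasureTheory

/-- `F : ℝ → ℝ` is a univariate CDF if it is the CDF of some probability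
measure on `ℝ`. -/
def IsCDF (F : ℝ → ℝ) : Prop :=
  ∃ ν : Measure ℝ, IsProbabilityMeasure ν ∧ ∀ t, F t = (ν (Set.Iic t)).toReal

section Quantile

open ProbabilityTheory Set Filter Topology

/-- Generalized inverse (quantile function) of the CDF of `ν`. -/
noncomputable def qtl (ν : Measure ℝ) (p : ℝ) : ℝ := sInf {x | p ≤ cdf ν x}

variable {ν : Measure ℝ} [IsProbabilityMeasure ν]

lemma qtl_set_nonempty {p : ℝ} (hp : p < 1) : {x | p ≤ cdf ν x}.Nonempty := by
  obtain ⟨x, hx⟩ := ((tendsto_cdf_atTop ν).eventually (eventually_gt_nhds hp)).exists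
  exact ⟨x, hx.le⟩

lemma qtl_set_bddBelow {p : ℝ} (hp : 0 < p) : BddBelow {x | p ≤ cdf ν x} := by
  obtain ⟨y, hy⟩ := ((tendsto_cdf_atBot ν).eventually (eventually_lt_nhds hp)).exists
  refine ⟨y, fun z hz => ?_⟩
  by_contra h
  push_neg at h
  exact absurd (hz.trans (monotone_cdf ν h.le)) (not_le.mpr hy)

lemma le_cdf_qtl {p : ℝ} (hp0 : 0 < p) (hp1 : p < 1) : p ≤ cdf ν (qtl ν p) := by
  have hne := qtl_set_nonempty (ν := ν) hp1
  have hbdd := qtl_set_bddBelow (ν := ν) hp0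
  have hmem : qtl ν p ∈ closure {x | p ≤ cdf ν x} := csInf_mem_closure hne hbdd
  have hsub : {x | p ≤ cdf ν x} ⊆ Ici (qtl ν p) := fun z hz => csInf_le hbdd hz
  have hcont : ContinuousWithinAt (cdf ν) {x | p ≤ cdf ν x} (qtl ν p) :=
    ((cdf ν).right_continuous (qtl ν p)).mono hsub
  have : cdf ν (qtl ν p) ∈ closure ((cdf ν) '' {x | p ≤ cdf ν x}) :=
    hcont.mem_closure_image hmem
  have hcl : closure ((cdf ν) '' {x | p ≤ cdf ν x}) ⊆ Ici p := by
    refine closure_minimal ?_ isClosed_Ici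
    rintro _ ⟨z, hz, rfl⟩
    exact hz
  exact hcl this

lemma qtl_le_iff {p x : ℝ} (hp0 : 0 < p) (hp1 : p < 1) :
    qtl ν p ≤ x ↔ p ≤ cdf ν x := by
  constructor
  · intro h
    exact (le_cdf_qtl hp0 hp1).trans (monotone_cdf ν h)
  · intro h
    exact csInf_le (qtl_set_bddBelow hp0) h

lemma qtl_of_nonpos {p : ℝ} (hp : p ≤ 0) : qtl ν p = 0 := by
  have : {x | p ≤ cdf ν x} = univ := eq_univ_of_forall fun x => hp.trans (cdf_nonneg ν x)
  rw [qtl, this]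
  exact Real.sInf_of_not_bddBelow (by simpa using not_bddBelow_univ (α := ℝ))

lemma qtl_of_one_lt {p : ℝ} (hp : 1 < p) : qtl ν p = 0 := by
  have : {x | p ≤ cdf ν x} = ∅ := by
    ext x
    simp only [mem_setOf_eq, mem_empty_iff_false, iff_false, not_le]
    exact (cdf_le_one ν x).trans_lt hp
  rw [qtl, this, Real.sInf_empty]

lemma measurable_qtl : Measurable (qtl ν) := by
  apply measurable_of_Iic
  intro x
  have hdecomp : qtl ν ⁻¹' Iic x =
      (Ioo 0 1 ∩ Iic (cdf ν x)) ∪ (Iic 0 ∩ {p : ℝ | (0:ℝ) ≤ x}) ∪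
        ({p : ℝ | p = 1 ∧ qtl ν p ≤ x}) ∪ (Ioi 1 ∩ {p : ℝ | (0:ℝ) ≤ x}) := by
    ext p
    simp only [mem_preimage, mem_Iic, mem_union, mem_inter_iff, mem_Ioo, mem_setOf_eq,
      mem_Ioi]
    constructor
    · intro h
      rcases le_or_gt p 0 with hp | hp
      · exact Or.inl (Or.inl (Or.inr ⟨hp, by rwa [qtl_of_nonpos hp] at h⟩))
      rcases lt_trichotomy p 1 with hp1 | hp1 | hp1
      · exact Or.inl (Or.inl (Or.inl ⟨⟨hp, hp1⟩, (qtl_le_iff hp hp1).mp h⟩))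
      · exact Or.inl (Or.inr ⟨hp1, h⟩)
      · exact Or.inr ⟨hp1, by rwa [qtl_of_one_lt hp1] at h⟩
    · rintro (((⟨⟨hp0, hp1⟩, hle⟩ | ⟨hp, hx⟩) | ⟨hp1, h⟩) | ⟨hp1, hx⟩)
      · exact (qtl_le_iff hp0 hp1).mpr hle
      · rw [qtl_of_nonpos hp]; exact hx
      · exact h
      · rw [qtl_of_one_lt hp1]; exact hx
  rw [hdecomp]
  have h1 : MeasurableSet ({p : ℝ | (0:ℝ) ≤ x}) := MeasurableSet.const _
  have h2 : MeasurableSet {p : ℝ | p = 1 ∧ qtl ν p ≤ x} := by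
    apply Set.Countable.measurableSet
    exact (Set.countable_singleton (1:ℝ)).mono (fun p hp => hp.1)
  exact (((measurableSet_Ioo.inter measurableSet_Iic).union
    (measurableSet_Iic.inter h1)).union h2).union (measurableSet_Ioi.inter h1)

instance inst_s1 : IsProbabilityMeasure stdUniform := by
  constructor
  rw [stdUniform, Measure.restrict_apply_univ, Real.volume_Icc]
  norm_num

lemma stdUniform_ae_Ioo : ∀ᵐ p ∂stdUniform, p ∈ Ioo (0:ℝ) 1 := by
  rw [ae_iff]
  have : {p : ℝ | ¬ p ∈ Ioo (0:ℝ) 1} = (Ioo (0:ℝ) 1)ᶜ := rfl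
  rw [this, stdUniform, Measure.restrict_apply measurableSet_Ioo.compl]
  have : (Ioo (0:ℝ) 1)ᶜ ∩ Icc 0 1 = Icc (0:ℝ) 1 \ Ioo 0 1 := by
    rw [Set.diff_eq, Set.inter_comm]
  rw [this, Set.Icc_diff_Ioo_same (by norm_num : (0:ℝ) ≤ 1)]
  rw [Set.insert_eq]
  exact measure_union_null Real.volume_singleton Real.volume_singleton

lemma map_qtl_stdUniform : Measure.map (qtl ν) stdUniform = ν := by
  have hmeas := measurable_qtl (ν := ν)
  haveI : IsProbabilityMeasure (Measure.map (qtl ν) stdUniform) :=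
    Measure.isProbabilityMeasure_map hmeas.aemeasurable
  refine Measure.ext_of_Iic _ _ (fun t => ?_)
  rw [Measure.map_apply hmeas measurableSet_Iic]
  have hae : (qtl ν ⁻¹' Iic t) =ᵐ[stdUniform] Iic (cdf ν t) := by
    filter_upwards [stdUniform_ae_Ioo] with p hp
    simp only [mem_preimage, mem_Iic, eq_iff_iff]
    exact qtl_le_iff hp.1 hp.2
  rw [measure_congr hae]
  rw [stdUniform, Measure.restrict_apply measurableSet_Iic]
  have h01 : Iic (cdf ν t) ∩ Icc (0:ℝ) 1 = Icc 0 (cdf ν t) := by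
    ext p
    simp only [mem_inter_iff, mem_Iic, mem_Icc]
    exact ⟨fun ⟨h1, h2, _⟩ => ⟨h2, h1⟩, fun ⟨h1, h2⟩ => ⟨h2, h1, h2.trans (cdf_le_one ν t)⟩⟩
  rw [h01, Real.volume_Icc, sub_zero, ofReal_cdf]

end Quantile

/-- **Converse of Sklar's theorem.** Given a `d`-dimensional copula `C` and
univariate CDFs `F 0, …, F (d-1)`, the function
`x ↦ C (F 0 (x 0), …, F (d-1) (x (d-1)))` is a valid `d`-dimensional joint CDF
(i.e. the CDF of a probability measure on `ℝ^d`) whose marginals are the `F i`. -/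
theorem sklar_converse
    (d : ℕ) (C : (Fin d → ℝ) → ℝ) (hC : IsCopula d C)
    (F : Fin d → ℝ → ℝ) (hF : ∀ i, IsCDF (F i)) :
    ∃ μ : Measure (Fin d → ℝ), IsProbabilityMeasure μ ∧
      (∀ x : Fin d → ℝ,
        C (fun i => F i (x i)) = (μ {y | ∀ i, y i ≤ x i}).toReal) ∧
      (∀ i : Fin d, ∀ t : ℝ,
        ((Measure.map (fun y => y i) μ) (Set.Iic t)).toReal = F i t) := by
  classical
  obtain ⟨μ₀, hμ₀prob, hμ₀marg, hμ₀C⟩ := hC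
  choose ν hνprob hνF using hF
  haveI := hνprob
  haveI := hμ₀prob
  open ProbabilityTheory Set in
  -- the quantile transform
  set T : (Fin d → ℝ) → (Fin d → ℝ) := fun u i => qtl (ν i) (u i) with hT_def
  have hQmeas : ∀ i, Measurable (qtl (ν i)) := fun i => measurable_qtl
  have hT : Measurable T :=
    measurable_pi_lambda _ (fun i => (hQmeas i).comp (measurable_pi_apply i))
  refine ⟨Measure.map T μ₀, Measure.isProbabilityMeasure_map hT.aemeasurable, ?_, ?_⟩
  · -- joint CDF
    intro x
    have hFcdf : ∀ i, F i (x i) = cdf (ν i) (x i) := fun i => by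
      rw [hνF i, cdf_eq_real]; rfl
    have hAmeas : MeasurableSet {y : Fin d → ℝ | ∀ i, y i ≤ x i} := by
      have : {y : Fin d → ℝ | ∀ i, y i ≤ x i} = ⋂ i, (fun y : Fin d → ℝ => y i) ⁻¹' Iic (x i) := by
        ext y; simp [Set.mem_iInter]
      rw [this]
      exact MeasurableSet.iInter fun i => (measurable_pi_apply i) measurableSet_Iic
    rw [Measure.map_apply hT hAmeas]
    -- a.e. all coordinates in (0,1)
    have hae : ∀ᵐ u ∂μ₀, ∀ i, u i ∈ Ioo (0:ℝ) 1 := by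
      rw [MeasureTheory.ae_all_iff]
      intro i
      have h0 : ∀ᵐ p ∂(Measure.map (fun y : Fin d → ℝ => y i) μ₀), p ∈ Ioo (0:ℝ) 1 := by
        rw [hμ₀marg i]; exact stdUniform_ae_Ioo
      exact (ae_map_iff (measurable_pi_apply i).aemeasurable measurableSet_Ioo).mp h0
    have haeeq : (T ⁻¹' {y | ∀ i, y i ≤ x i}) =ᵐ[μ₀] {u | ∀ i, u i ≤ F i (x i)} := by
      filter_upwards [hae] with u hu
      simp only [Set.mem_preimage, Set.mem_setOf_eq, eq_iff_iff, hT_def]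
      refine forall_congr' fun i => ?_
      rw [hFcdf i]
      exact qtl_le_iff (hu i).1 (hu i).2
    rw [measure_congr haeeq, hμ₀C]
  · -- marginals
    intro i t
    have hproj : Measurable (fun y : Fin d → ℝ => y i) := measurable_pi_apply i
    have hmap : Measure.map (fun y : Fin d → ℝ => y i) (Measure.map T μ₀) = ν i := by
      rw [Measure.map_map hproj hT]
      have : (fun y : Fin d → ℝ => y i) ∘ T = qtl (ν i) ∘ (fun y : Fin d → ℝ => y i) := rfl
      rw [this, ← Measure.map_map (hQmeas i) hproj, hμ₀marg i, map_qtl_stdUniform]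
    rw [hmap, hνF i]
end
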